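/- arXiv:2201.13413 — 2 statements merged into one kernel-verified Lean document; each statement's English description precedes it below -/
import Mathlib

section
/- Let F, H : [0,M] → [0,∞) be increasing with H(u) = ∫₀ᵘ h(s) ds for a continuous positive function h on (0,M) integrable at 0, let P be positive continuous on (0,M) with F = hP, and suppose there exist λ ∈ (0,2) and C₂ > 0 such that (√(sF(s)))^λ ≤ C₂ H(s) for all s ∈ [0,M]. Then for all s ∈ (0,M], H(s) ≥ ( H(M)^{−Λ} + Λ C₂^{1+Λ} ∫ₛᴹ dτ/(τ P(τ)) )^{−1/Λ}, where Λ = 2/λ − 1 > 0. -/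
open Set Real MeasureTheory intervalIntegral

/-- Lower bound for `H` (Proposition 5.1): if `H u = ∫₀ᵘ h`, `F = h·P`, and
`(√(s F s))^λ ≤ C₂ H s` on `[0,M]` with `λ ∈ (0,2)`, then for `s ∈ (0,M]`,
`H s ≥ (H M ^ (−Λ) + Λ C₂^(1+Λ) ∫ₛᴹ dτ/(τ P τ))^(−1/Λ)` where `Λ = 2/λ − 1`. -/
theorem H_lower_bound
    (M lam Lam C₂ : ℝ) (hM : 0 < M) (hlam : lam ∈ Ioo (0 : ℝ) 2)
    (hLam : Lam = 2 / lam - 1) (hC₂ : 0 < C₂)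
    (h H P F : ℝ → ℝ)
    (hhcont : ContinuousOn h (Ioo 0 M)) (hhpos : ∀ s ∈ Ioo 0 M, 0 < h s)
    (hhint : IntervalIntegrable h volume 0 M)
    (hHdef : ∀ u ∈ Icc 0 M, H u = ∫ s in (0 : ℝ)..u, h s)
    (hPcont : ContinuousOn P (Icc 0 M)) (hPpos : ∀ s ∈ Ioc 0 M, 0 < P s)
    (hFdef : ∀ s ∈ Icc 0 M, F s = h s * P s)
    (hstruct : ∀ s ∈ Icc 0 M, Real.sqrt (s * F s) ^ lam ≤ C₂ * H s) :
    ∀ s ∈ Ioc 0 M,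
      H s ≥ (H M ^ (-Lam) + Lam * C₂ ^ (1 + Lam) *
        ∫ τ in s..M, 1 / (τ * P τ)) ^ (-(1 / Lam)) := by
  obtain ⟨hlam0, hlam2⟩ := hlam
  have hLam0 : 0 < Lam := by
    rw [hLam]; have : 1 < 2 / lam := (one_lt_div hlam0).2 hlam2; linarith
  have h2lam : 2 / lam = 1 + Lam := by rw [hLam]; ring
  intro s hs
  obtain ⟨hs0, hsM⟩ := hs
  -- interval integrability of h on subintervals
  have hint : ∀ u ∈ Icc (0:ℝ) M, IntervalIntegrable h volume 0 u := fun u hu =>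
    hhint.mono_set (by rw [uIcc_of_le hu.1, uIcc_of_le hM.le]; exact Icc_subset_Icc_right hu.2)
  -- H is positive on (0,M]
  have hHpos : ∀ u ∈ Ioc (0:ℝ) M, 0 < H u := by
    intro u hu
    rw [hHdef u ⟨hu.1.le, hu.2⟩]
    exact intervalIntegral_pos_of_pos_on (hint u ⟨hu.1.le, hu.2⟩)
      (fun x hx => hhpos x ⟨hx.1, hx.2.trans_le hu.2⟩) hu.1
  -- H continuous on Icc s M
  have hHcont : ContinuousOn H (Icc s M) := by
    have hprim : ContinuousOn (fun x => ∫ t in (0:ℝ)..x, h t) (uIcc 0 M) :=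
      continuousOn_primitive_interval (by
        rw [uIcc_of_le hM.le]
        exact (intervalIntegrable_iff_integrableOn_Icc_of_le hM.le).mp hhint)
    rw [uIcc_of_le hM.le] at hprim
    exact (hprim.mono (Icc_subset_Icc_left hs0.le)).congr
      (fun u hu => hHdef u ⟨hs0.le.trans hu.1, hu.2⟩)
  -- key pointwise bound
  have hkey : ∀ τ ∈ Ioo s M, h τ * (τ * P τ) ≤ C₂ ^ (1 + Lam) * H τ ^ (1 + Lam) := by
    intro τ hτ
    have hτ0 : 0 < τ := hs0.trans hτ.1
    have hτM : τ ∈ Ioo (0:ℝ) M := ⟨hτ0, hτ.2⟩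
    have hτI : τ ∈ Icc (0:ℝ) M := ⟨hτ0.le, hτ.2.le⟩
    have hP0 : 0 < P τ := hPpos τ ⟨hτ0, hτ.2.le⟩
    have hh0 : 0 < h τ := hhpos τ hτM
    have hH0 : 0 < H τ := hHpos τ ⟨hτ0, hτ.2.le⟩
    set x := τ * F τ with hx
    have hx0 : 0 ≤ x := by
      rw [hx, hFdef τ hτI]; positivity
    have h1 : x ^ (lam / 2) ≤ C₂ * H τ := by
      have h0 := hstruct τ hτI
      rw [Real.sqrt_eq_rpow, ← Real.rpow_mul hx0] at h0
      rwa [show (1:ℝ)/2 * lam = lam / 2 by ring] at h0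
    have h2 : (x ^ (lam / 2)) ^ (2 / lam) ≤ (C₂ * H τ) ^ (2 / lam) :=
      Real.rpow_le_rpow (Real.rpow_nonneg hx0 _) h1 (by positivity)
    rw [← Real.rpow_mul hx0, div_mul_div_comm, mul_comm lam 2, div_self (by positivity),
      Real.rpow_one, Real.mul_rpow hC₂.le hH0.le, h2lam] at h2
    calc h τ * (τ * P τ) = x := by rw [hx, hFdef τ hτI]; ring
      _ ≤ _ := h2
  -- H values on Icc s M are positive
  have hHpos' : ∀ τ ∈ Icc s M, 0 < H τ := fun τ hτ => hHpos τ ⟨hs0.trans_le hτ.1, hτ.2⟩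
  -- derivative of G := H^(-Lam)
  have hderiv : ∀ τ ∈ Ioo s M,
      HasDerivAt (fun u => H u ^ (-Lam)) (-Lam * H τ ^ (-Lam - 1) * h τ) τ := by
    intro τ hτ
    have hτM : τ ∈ Ioo (0:ℝ) M := ⟨hs0.trans hτ.1, hτ.2⟩
    have hHd : HasDerivAt H (h τ) τ := by
      have hd : HasDerivAt (fun u => ∫ t in (0:ℝ)..u, h t) (h τ) τ :=
        integral_hasDerivAt_right (hint τ ⟨hτM.1.le, hτM.2.le⟩)
          (hhcont.stronglyMeasurableAtFilter isOpen_Ioo _ hτM)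
          (hhcont.continuousAt (isOpen_Ioo.mem_nhds hτM))
      apply hd.congr_of_eventuallyEq
      filter_upwards [isOpen_Ioo.mem_nhds hτM] with u hu
      exact hHdef u ⟨hu.1.le, hu.2.le⟩
    have hH0 : H τ ≠ 0 := (hHpos τ ⟨hτM.1, hτM.2.le⟩).ne'
    have hc := (Real.hasDerivAt_rpow_const (p := -Lam) (Or.inl hH0)).comp τ hHd
    exact hc
  -- integrability of the derivative
  have hgint : IntervalIntegrable (fun τ => -Lam * H τ ^ (-Lam - 1) * h τ) volume s M := by
    have hh' : IntervalIntegrable h volume s M :=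
      hhint.mono_set (by rw [uIcc_of_le hsM, uIcc_of_le hM.le]; exact Icc_subset_Icc_left hs0.le)
    have h1 : IntervalIntegrable (fun τ => (-Lam * H τ ^ (-Lam - 1)) * h τ) volume s M := by
      apply hh'.continuousOn_mul
      rw [uIcc_of_le hsM]
      exact continuousOn_const.mul (hHcont.rpow_const
        (fun τ hτ => Or.inl (hHpos' τ hτ).ne'))
    simpa [mul_assoc] using h1
  -- FTC
  have hG : ∫ τ in s..M, -Lam * H τ ^ (-Lam - 1) * h τ = H M ^ (-Lam) - H s ^ (-Lam) :=
    integral_eq_sub_of_hasDerivAt_of_le hsM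
      (hHcont.rpow_const (fun τ hτ => Or.inl (hHpos' τ hτ).ne')) hderiv hgint
  -- RHS integrand continuous hence integrable
  have hQcont : ContinuousOn (fun τ => Lam * C₂ ^ (1 + Lam) * (1 / (τ * P τ))) (Icc s M) := by
    apply continuousOn_const.mul
    apply continuousOn_const.div
    · exact continuousOn_id.mul (hPcont.mono (Icc_subset_Icc_left hs0.le))
    · intro τ hτ
      have h1 : 0 < P τ := hPpos τ ⟨hs0.trans_le hτ.1, hτ.2⟩
      have h2 : 0 < τ := hs0.trans_le hτ.1
      positivity
  have hQint : IntervalIntegrable (fun τ => Lam * C₂ ^ (1 + Lam) * (1 / (τ * P τ))) volume s M :=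
    hQcont.intervalIntegrable_of_Icc hsM
  -- comparison of integrals
  have hcomp : ∫ τ in s..M, Lam * H τ ^ (-Lam - 1) * h τ ≤
      ∫ τ in s..M, Lam * C₂ ^ (1 + Lam) * (1 / (τ * P τ)) := by
    have hgint' : IntervalIntegrable (fun τ => Lam * H τ ^ (-Lam - 1) * h τ) volume s M := by
      have hh' : IntervalIntegrable h volume s M :=
        hhint.mono_set (by rw [uIcc_of_le hsM, uIcc_of_le hM.le]; exact Icc_subset_Icc_left hs0.le)
      have h1 : IntervalIntegrable (fun τ => (Lam * H τ ^ (-Lam - 1)) * h τ) volume s M := by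
        apply hh'.continuousOn_mul
        rw [uIcc_of_le hsM]
        exact continuousOn_const.mul (hHcont.rpow_const
          (fun τ hτ => Or.inl (hHpos' τ hτ).ne'))
      simpa [mul_assoc] using h1
    apply integral_mono_ae_restrict hsM hgint' hQint
    rw [Measure.restrict_congr_set Ioo_ae_eq_Icc.symm]
    refine (ae_restrict_iff' measurableSet_Ioo).mpr ?_
    filter_upwards with τ hτ
    have hτ0 : 0 < τ := hs0.trans hτ.1
    have hP0 : 0 < P τ := hPpos τ ⟨hτ0, hτ.2.le⟩
    have hH0 : 0 < H τ := hHpos τ ⟨hτ0, hτ.2.le⟩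
    have hh0 : 0 < h τ := hhpos τ ⟨hτ0, hτ.2⟩
    have hHL : (0:ℝ) < H τ ^ (1 + Lam) := Real.rpow_pos_of_pos hH0 _
    have hrw : H τ ^ (-Lam - 1) = (H τ ^ (1 + Lam))⁻¹ := by
      rw [← Real.rpow_neg hH0.le]; congr 1; ring
    have base : h τ / H τ ^ (1 + Lam) ≤ C₂ ^ (1 + Lam) / (τ * P τ) := by
      rw [div_le_div_iff₀ hHL (by positivity)]
      exact hkey τ hτ
    have hmul := mul_le_mul_of_nonneg_left base hLam0.le
    have e1 : Lam * H τ ^ (-Lam - 1) * h τ = Lam * (h τ / H τ ^ (1 + Lam)) := by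
      rw [hrw]; ring
    have e2 : Lam * C₂ ^ (1 + Lam) * (1 / (τ * P τ)) = Lam * (C₂ ^ (1 + Lam) / (τ * P τ)) := by
      ring
    rw [e1, e2]; exact hmul
  -- putting it together
  have hint_eq : ∫ τ in s..M, Lam * H τ ^ (-Lam - 1) * h τ
      = H s ^ (-Lam) - H M ^ (-Lam) := by
    have e : (∫ τ in s..M, Lam * H τ ^ (-Lam - 1) * h τ)
        = -∫ τ in s..M, -Lam * H τ ^ (-Lam - 1) * h τ := by
      rw [← intervalIntegral.integral_neg]; congr 1 with τ; ring
    rw [e, hG]; ring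
  have hconst : ∫ τ in s..M, Lam * C₂ ^ (1 + Lam) * (1 / (τ * P τ))
      = Lam * C₂ ^ (1 + Lam) * ∫ τ in s..M, 1 / (τ * P τ) :=
    intervalIntegral.integral_const_mul _ _
  have hmain : H s ^ (-Lam) ≤ H M ^ (-Lam) + Lam * C₂ ^ (1 + Lam) *
      ∫ τ in s..M, 1 / (τ * P τ) := by
    rw [hint_eq, hconst] at hcomp; linarith
  have hHs : 0 < H s := hHpos s ⟨hs0, hsM⟩
  have hpos : 0 < H s ^ (-Lam) := Real.rpow_pos_of_pos hHs _
  have hz : -(1 / Lam) ≤ 0 := by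
    have : (0:ℝ) < 1 / Lam := by positivity
    linarith
  have hfin := Real.rpow_le_rpow_of_nonpos hpos hmain hz
  have hid : (H s ^ (-Lam)) ^ (-(1 / Lam)) = H s := by
    rw [← Real.rpow_mul hHs.le]
    rw [show -Lam * -(1 / Lam) = 1 by field_simp, Real.rpow_one]
  rw [hid] at hfin
  exact hfin
end

section
/- Let ζ : (0,1] → ℝ be continuous with 0 < k₁ ≤ ζ(s) ≤ k₂, and set P(s) = exp(−∫ₛ¹ ζ(τ)/τ dτ), I(s) = ∫ₛ¹ t^{−1} exp(∫ₜ¹ ζ(τ)/τ dτ) dt. If ζ(s) → L as s → 0 for some L > 0, then P(s)·I(s) → 1/L as s → 0. In particular, P·I is bounded above by a constant depending only on k₁ near 0. -/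
open Set Real Filter intervalIntegral MeasureTheory

lemma aux_int {ζ : ℝ → ℝ} (hζcont : ContinuousOn ζ (Ioc 0 1)) {a b : ℝ}
    (ha : 0 < a) (hab : a ≤ b) (hb : b ≤ 1) :
    IntervalIntegrable (fun τ => ζ τ / τ) volume a b := by
  apply ContinuousOn.intervalIntegrable
  have hsub : uIcc a b ⊆ Ioc 0 1 := by
    rw [uIcc_of_le hab]
    exact fun x hx => ⟨ha.trans_le hx.1, hx.2.trans hb⟩
  exact (hζcont.mono hsub).div continuousOn_id (fun x hx => (hsub hx).1.ne')

lemma aux_log_le {ζ : ℝ → ℝ} (hζcont : ContinuousOn ζ (Ioc 0 1)) {c s t : ℝ}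
    (hs : 0 < s) (hst : s ≤ t) (ht : t ≤ 1)
    (hc : ∀ τ ∈ Icc s t, c ≤ ζ τ) :
    c * Real.log (t / s) ≤ ∫ τ in s..t, ζ τ / τ := by
  have h0 : (0 : ℝ) ∉ uIcc s t := by
    rw [uIcc_of_le hst]; exact fun h => absurd h.1 (not_le.2 hs)
  have h1 : ∫ τ in s..t, c * τ⁻¹ = c * Real.log (t / s) := by
    rw [intervalIntegral.integral_const_mul, integral_inv h0]
  rw [← h1]
  apply intervalIntegral.integral_mono_on hst
    ((intervalIntegrable_inv (fun x hx => by rw [uIcc_of_le hst] at hx; exact (hs.trans_le hx.1).ne')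
      continuousOn_id).const_mul c)
    (aux_int hζcont hs hst ht)
  intro x hx
  have hx0 : 0 < x := hs.trans_le hx.1
  rw [div_eq_mul_inv]
  exact mul_le_mul_of_nonneg_right (hc x hx) (inv_nonneg.2 hx0.le)

lemma aux_log_ge {ζ : ℝ → ℝ} (hζcont : ContinuousOn ζ (Ioc 0 1)) {c s t : ℝ}
    (hs : 0 < s) (hst : s ≤ t) (ht : t ≤ 1)
    (hc : ∀ τ ∈ Icc s t, ζ τ ≤ c) :
    (∫ τ in s..t, ζ τ / τ) ≤ c * Real.log (t / s) := by
  have h0 : (0 : ℝ) ∉ uIcc s t := by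
    rw [uIcc_of_le hst]; exact fun h => absurd h.1 (not_le.2 hs)
  have h1 : ∫ τ in s..t, c * τ⁻¹ = c * Real.log (t / s) := by
    rw [intervalIntegral.integral_const_mul, integral_inv h0]
  rw [← h1]
  apply intervalIntegral.integral_mono_on hst (aux_int hζcont hs hst ht)
    ((intervalIntegrable_inv (fun x hx => by rw [uIcc_of_le hst] at hx; exact (hs.trans_le hx.1).ne')
      continuousOn_id).const_mul c)
  intro x hx
  have hx0 : 0 < x := hs.trans_le hx.1
  rw [div_eq_mul_inv]
  exact mul_le_mul_of_nonneg_right (hc x hx) (inv_nonneg.2 hx0.le)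


lemma aux_rpow_int {s δ c : ℝ} (hs : 0 < s) (hsd : s ≤ δ) (hc : 0 < c) :
    ∫ t in s..δ, (1 / t) * (s / t) ^ c = (1 - (s / δ) ^ c) / c := by
  have hδ : 0 < δ := hs.trans_le hsd
  have hcongr : ∀ t ∈ uIcc s δ, (1 / t) * (s / t) ^ c = s ^ c * t ^ (-1 - c) := by
    intro t htm
    rw [uIcc_of_le hsd] at htm
    have ht0 : 0 < t := hs.trans_le htm.1
    have h1 : t ^ (-1 - c) = t⁻¹ / t ^ c := by
      rw [Real.rpow_sub ht0, Real.rpow_neg_one]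
    rw [Real.div_rpow hs.le ht0.le, h1, one_div]
    ring
  have hne : (-1 - c : ℝ) ≠ -1 := by intro h; apply hc.ne'; linarith
  have h0 : (0 : ℝ) ∉ uIcc s δ := by
    rw [uIcc_of_le hsd]; exact fun h => absurd h.1 (not_le.2 hs)
  rw [intervalIntegral.integral_congr hcongr, intervalIntegral.integral_const_mul,
    integral_rpow (Or.inr ⟨hne, h0⟩)]
  have h2 : (-1 - c + 1 : ℝ) = -c := by ring
  rw [h2]
  have hsc : s ^ c * s ^ (-c) = 1 := by rw [← Real.rpow_add hs]; simp
  have hdc : s ^ c * δ ^ (-c) = (s / δ) ^ c := by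
    rw [Real.div_rpow hs.le hδ.le, Real.rpow_neg hδ.le, div_eq_mul_inv]
  have h3 : s ^ c * (δ ^ (-c) - s ^ (-c)) = (s / δ) ^ c - 1 := by rw [mul_sub, hdc, hsc]
  rw [← mul_div_assoc, h3]
  rw [div_neg, ← neg_div, neg_sub]

lemma aux_h_cont {ζ : ℝ → ℝ} (hζcont : ContinuousOn ζ (Ioc 0 1)) {s : ℝ}
    (hs : 0 < s) (hs1 : s ≤ 1) :
    ContinuousOn (fun t => (1 / t) * Real.exp (-(∫ τ in s..t, ζ τ / τ))) (Icc s 1) := by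
  have hF : ContinuousOn (fun t => ∫ τ in s..t, ζ τ / τ) (Icc s 1) := by
    have := intervalIntegral.continuousOn_primitive_interval'
      (aux_int hζcont hs hs1 le_rfl) (left_mem_uIcc (a := s) (b := 1))
    rwa [uIcc_of_le hs1] at this
  have h1 : ContinuousOn (fun t : ℝ => 1 / t) (Icc s 1) :=
    continuousOn_const.div continuousOn_id (fun x hx => (hs.trans_le hx.1).ne')
  exact h1.mul (Real.continuous_exp.comp_continuousOn hF.neg)
lemma aux_exp_le {s t c A : ℝ} (hs : 0 < s) (ht : 0 < t)
    (hA : c * Real.log (t / s) ≤ A) : Real.exp (-A) ≤ (s / t) ^ c := by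
  rw [Real.rpow_def_of_pos (div_pos hs ht), Real.log_div hs.ne' ht.ne']
  apply Real.exp_le_exp.2
  rw [Real.log_div ht.ne' hs.ne'] at hA
  nlinarith [hA]

lemma aux_exp_ge {s t c A : ℝ} (hs : 0 < s) (ht : 0 < t)
    (hA : A ≤ c * Real.log (t / s)) : (s / t) ^ c ≤ Real.exp (-A) := by
  rw [Real.rpow_def_of_pos (div_pos hs ht), Real.log_div hs.ne' ht.ne']
  apply Real.exp_le_exp.2
  rw [Real.log_div ht.ne' hs.ne'] at hA
  nlinarith [hA]

lemma key_upper {ζ : ℝ → ℝ} (hζcont : ContinuousOn ζ (Ioc 0 1)) {k₁ : ℝ} (hk₁ : 0 < k₁)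
    (hζbd : ∀ s ∈ Ioc (0:ℝ) 1, k₁ ≤ ζ s)
    {c δ : ℝ} (hc : 0 < c) (hδ : 0 < δ) (hδ1 : δ ≤ 1)
    (hζδ : ∀ τ ∈ Ioc (0:ℝ) δ, c ≤ ζ τ) {s : ℝ} (hs : 0 < s) (hsδ : s ≤ δ) :
    (∫ t in s..1, (1 / t) * Real.exp (-(∫ τ in s..t, ζ τ / τ)))
      ≤ 1 / c + (s / δ) ^ k₁ * (-Real.log δ) := by
  have hs1 : s ≤ 1 := hsδ.trans hδ1
  have hcont := aux_h_cont hζcont hs hs1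
  have hint1 : IntervalIntegrable
      (fun t => (1 / t) * Real.exp (-(∫ τ in s..t, ζ τ / τ))) volume s δ := by
    apply ContinuousOn.intervalIntegrable
    apply hcont.mono
    rw [uIcc_of_le hsδ]
    exact Icc_subset_Icc le_rfl hδ1
  have hint2 : IntervalIntegrable
      (fun t => (1 / t) * Real.exp (-(∫ τ in s..t, ζ τ / τ))) volume δ 1 := by
    apply ContinuousOn.intervalIntegrable
    apply hcont.mono
    rw [uIcc_of_le hδ1]
    exact Icc_subset_Icc hsδ le_rfl
  rw [← intervalIntegral.integral_add_adjacent_intervals hint1 hint2]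
  apply add_le_add
  · -- first piece ≤ 1/c
    have hrint : IntervalIntegrable (fun t => (1 / t) * (s / t) ^ c) volume s δ := by
      apply ContinuousOn.intervalIntegrable
      have hne : ∀ x ∈ uIcc s δ, x ≠ 0 := by
        intro x hx; rw [uIcc_of_le hsδ] at hx; exact (hs.trans_le hx.1).ne'
      exact (continuousOn_const.div continuousOn_id hne).mul
        ((continuousOn_const.div continuousOn_id hne).rpow_const
          (fun x hx => Or.inr hc.le))
    have le1 : (∫ t in s..δ, (1 / t) * Real.exp (-(∫ τ in s..t, ζ τ / τ)))
        ≤ ∫ t in s..δ, (1 / t) * (s / t) ^ c := by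
      apply intervalIntegral.integral_mono_on hsδ hint1 hrint
      intro t ht
      have ht0 : 0 < t := hs.trans_le ht.1
      apply mul_le_mul_of_nonneg_left _ (one_div_nonneg.2 ht0.le)
      apply aux_exp_le hs ht0
      apply aux_log_le hζcont hs ht.1 (ht.2.trans hδ1)
      intro τ hτ
      exact hζδ τ ⟨hs.trans_le hτ.1, hτ.2.trans ht.2⟩
    rw [aux_rpow_int hs hsδ hc] at le1
    have : (1 - (s / δ) ^ c) / c ≤ 1 / c := by
      gcongr
      linarith [Real.rpow_nonneg (div_nonneg hs.le hδ.le) c]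
    linarith
  · -- tail ≤ (s/δ)^k₁ * (-log δ)
    have h0' : (0 : ℝ) ∉ uIcc δ 1 := by
      rw [uIcc_of_le hδ1]; exact fun h => absurd h.1 (not_le.2 hδ)
    have hrint : IntervalIntegrable (fun t => (s / δ) ^ k₁ * t⁻¹) volume δ 1 := by
      apply ContinuousOn.intervalIntegrable
      refine continuousOn_const.mul (ContinuousOn.inv₀ continuousOn_id ?_)
      intro x hx
      rw [uIcc_of_le hδ1] at hx
      exact (hδ.trans_le hx.1).ne'
    have e2 : (∫ t in δ..1, (s / δ) ^ k₁ * t⁻¹) = (s / δ) ^ k₁ * (-Real.log δ) := by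
      rw [intervalIntegral.integral_const_mul, integral_inv h0', one_div, Real.log_inv]
    rw [← e2]
    apply intervalIntegral.integral_mono_on hδ1 hint2 hrint
    intro t ht
    have ht0 : 0 < t := hδ.trans_le ht.1
    have hexp : Real.exp (-(∫ τ in s..t, ζ τ / τ)) ≤ (s / δ) ^ k₁ := by
      have hsplit : (∫ τ in s..t, ζ τ / τ)
          = (∫ τ in s..δ, ζ τ / τ) + ∫ τ in δ..t, ζ τ / τ :=
        (intervalIntegral.integral_add_adjacent_intervals
          (aux_int hζcont hs hsδ hδ1) (aux_int hζcont hδ ht.1 ht.2)).symm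
      have h2 : 0 ≤ ∫ τ in δ..t, ζ τ / τ := by
        apply intervalIntegral.integral_nonneg ht.1
        intro x hx
        have hx0 : 0 < x := hδ.trans_le hx.1
        exact div_nonneg (hk₁.le.trans (hζbd x ⟨hx0, hx.2.trans ht.2⟩)) hx0.le
      have h3 : k₁ * Real.log (δ / s) ≤ ∫ τ in s..δ, ζ τ / τ := by
        apply aux_log_le hζcont hs hsδ hδ1
        intro τ hτ
        exact hζbd τ ⟨hs.trans_le hτ.1, hτ.2.trans hδ1⟩
      exact aux_exp_le hs hδ (by rw [hsplit]; linarith)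
    calc (1 / t) * Real.exp (-(∫ τ in s..t, ζ τ / τ))
        ≤ (1 / t) * ((s / δ) ^ k₁) :=
          mul_le_mul_of_nonneg_left hexp (one_div_nonneg.2 ht0.le)
      _ = (s / δ) ^ k₁ * t⁻¹ := by rw [one_div]; ring

lemma key_lower {ζ : ℝ → ℝ} (hζcont : ContinuousOn ζ (Ioc 0 1))
    {c δ : ℝ} (hc : 0 < c) (hδ : 0 < δ) (hδ1 : δ ≤ 1)
    (hζδ : ∀ τ ∈ Ioc (0:ℝ) δ, ζ τ ≤ c) {s : ℝ} (hs : 0 < s) (hsδ : s ≤ δ) :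
    (1 - (s / δ) ^ c) / c
      ≤ ∫ t in s..1, (1 / t) * Real.exp (-(∫ τ in s..t, ζ τ / τ)) := by
  have hs1 : s ≤ 1 := hsδ.trans hδ1
  have hcont := aux_h_cont hζcont hs hs1
  have hint1 : IntervalIntegrable
      (fun t => (1 / t) * Real.exp (-(∫ τ in s..t, ζ τ / τ))) volume s δ := by
    apply ContinuousOn.intervalIntegrable
    apply hcont.mono
    rw [uIcc_of_le hsδ]
    exact Icc_subset_Icc le_rfl hδ1
  have hint2 : IntervalIntegrable
      (fun t => (1 / t) * Real.exp (-(∫ τ in s..t, ζ τ / τ))) volume δ 1 := by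
    apply ContinuousOn.intervalIntegrable
    apply hcont.mono
    rw [uIcc_of_le hδ1]
    exact Icc_subset_Icc hsδ le_rfl
  rw [← intervalIntegral.integral_add_adjacent_intervals hint1 hint2]
  have h2 : 0 ≤ ∫ t in δ..1, (1 / t) * Real.exp (-(∫ τ in s..t, ζ τ / τ)) := by
    apply intervalIntegral.integral_nonneg hδ1
    intro x hx
    have hx0 : 0 < x := hδ.trans_le hx.1
    exact mul_nonneg (one_div_nonneg.2 hx0.le) (Real.exp_nonneg _)
  have h1 : (1 - (s / δ) ^ c) / c
      ≤ ∫ t in s..δ, (1 / t) * Real.exp (-(∫ τ in s..t, ζ τ / τ)) := by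
    rw [← aux_rpow_int hs hsδ hc]
    have hrint : IntervalIntegrable (fun t => (1 / t) * (s / t) ^ c) volume s δ := by
      apply ContinuousOn.intervalIntegrable
      have hne : ∀ x ∈ uIcc s δ, x ≠ 0 := by
        intro x hx; rw [uIcc_of_le hsδ] at hx; exact (hs.trans_le hx.1).ne'
      exact (continuousOn_const.div continuousOn_id hne).mul
        ((continuousOn_const.div continuousOn_id hne).rpow_const
          (fun x hx => Or.inr hc.le))
    apply intervalIntegral.integral_mono_on hsδ hrint hint1
    intro t ht
    have ht0 : 0 < t := hs.trans_le ht.1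
    apply mul_le_mul_of_nonneg_left _ (one_div_nonneg.2 ht0.le)
    apply aux_exp_ge hs ht0
    apply aux_log_ge hζcont hs ht.1 (ht.2.trans hδ1)
    intro τ hτ
    exact hζδ τ ⟨hs.trans_le hτ.1, hτ.2.trans ht.2⟩
  linarith

/-- For `P(s) = exp(−∫ₛ¹ ζ(τ)/τ dτ)` and `I(s) = ∫ₛ¹ (1/t) exp(∫ₜ¹ ζ(τ)/τ dτ) dt`
with `0 < k₁ ≤ ζ ≤ k₂` continuous on `(0,1]`: if `ζ(s) → L > 0` as `s → 0⁺`,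
then `P(s) I(s) → 1/L`; in particular `P·I` is eventually bounded above near `0`
by a constant depending only on `k₁`. -/
theorem example_zeta_P
    (ζ : ℝ → ℝ) (k₁ k₂ L : ℝ) (hk₁ : 0 < k₁)
    (hζcont : ContinuousOn ζ (Ioc 0 1))
    (hζbd : ∀ s ∈ Ioc (0 : ℝ) 1, k₁ ≤ ζ s ∧ ζ s ≤ k₂)
    (hL : 0 < L)
    (hζlim : Tendsto ζ (nhdsWithin 0 (Ioc (0 : ℝ) 1)) (nhds L))
    (P I : ℝ → ℝ)
    (hP : ∀ s ∈ Ioc (0 : ℝ) 1, P s = Real.exp (-(∫ τ in s..1, ζ τ / τ)))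
    (hI : ∀ s ∈ Ioc (0 : ℝ) 1,
      I s = ∫ t in s..1, (1 / t) * Real.exp (∫ τ in t..1, ζ τ / τ)) :
    Tendsto (fun s => P s * I s) (nhdsWithin 0 (Ioc (0 : ℝ) 1)) (nhds (1 / L)) ∧
      ∀ᶠ s in nhdsWithin 0 (Ioc (0 : ℝ) 1), P s * I s ≤ 1 / k₁ + 1 := by
  set l := nhdsWithin (0 : ℝ) (Ioc (0 : ℝ) 1) with hl
  -- extracting a δ from an eventual statement
  have hδget : ∀ {p : ℝ → Prop}, (∀ᶠ τ in l, p τ) →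
      ∃ δ, 0 < δ ∧ δ ≤ 1 ∧ ∀ τ ∈ Ioc (0 : ℝ) δ, p τ := by
    intro p hp
    rw [hl, Filter.eventually_iff, Metric.mem_nhdsWithin_iff] at hp
    obtain ⟨d, hd, hdp⟩ := hp
    refine ⟨min (d / 2) 1, by positivity, min_le_right _ _, ?_⟩
    intro τ hτ
    have hτd : τ ≤ d / 2 := hτ.2.trans (min_le_left _ _)
    apply hdp
    constructor
    · rw [Metric.mem_ball, Real.dist_eq, sub_zero, abs_of_pos hτ.1]
      linarith
    · exact ⟨hτ.1, hτ.2.trans (min_le_right _ _)⟩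
  -- tendsto of (s/δ)^c to 0
  have hrp : ∀ {c δ : ℝ}, 0 < c → 0 < δ →
      Tendsto (fun s : ℝ => (s / δ) ^ c) l (nhds 0) := by
    intro c δ hc hδ
    have h1 : ContinuousAt (fun x : ℝ => x ^ c) 0 :=
      Real.continuousAt_rpow_const 0 c (Or.inr hc.le)
    have h2 : Tendsto (fun s : ℝ => s / δ) l (nhds 0) := by
      have h3 : Tendsto (fun s : ℝ => s / δ) (nhds 0) (nhds (0 / δ)) :=
        (continuous_id.div_const δ).tendsto 0
      rw [zero_div] at h3
      exact h3.mono_left nhdsWithin_le_nhds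
    have := h1.tendsto.comp h2
    simpa [Real.zero_rpow hc.ne', Function.comp_def] using this
  have hJ : ∀ᶠ s in l, P s * I s
      = ∫ t in s..1, (1 / t) * Real.exp (-(∫ τ in s..t, ζ τ / τ)) := by
    filter_upwards [eventually_mem_nhdsWithin] with s hs
    rw [hP s hs, hI s hs, ← intervalIntegral.integral_const_mul]
    apply intervalIntegral.integral_congr
    intro t ht
    rw [uIcc_of_le hs.2] at ht
    have ht0 : 0 < t := hs.1.trans_le ht.1
    have hadd : (∫ τ in s..t, ζ τ / τ) + (∫ τ in t..1, ζ τ / τ)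
        = ∫ τ in s..1, ζ τ / τ :=
      intervalIntegral.integral_add_adjacent_intervals
        (aux_int hζcont hs.1 ht.1 ht.2) (aux_int hζcont ht0 ht.2 le_rfl)
    dsimp only
    rw [← hadd]
    have hB : Real.exp (-(∫ τ in t..1, ζ τ / τ)) * Real.exp (∫ τ in t..1, ζ τ / τ)
        = 1 := by rw [← Real.exp_add]; simp
    calc Real.exp (-((∫ τ in s..t, ζ τ / τ) + ∫ τ in t..1, ζ τ / τ))
          * (1 / t * Real.exp (∫ τ in t..1, ζ τ / τ))
        = 1 / t * Real.exp (-(∫ τ in s..t, ζ τ / τ))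
          * (Real.exp (-(∫ τ in t..1, ζ τ / τ)) * Real.exp (∫ τ in t..1, ζ τ / τ)) := by
          rw [neg_add, Real.exp_add]; ring
      _ = 1 / t * Real.exp (-(∫ τ in s..t, ζ τ / τ)) := by rw [hB, mul_one]
  have htendJ : Tendsto (fun s => P s * I s) l (nhds (1 / L)) := by
    refine tendsto_order.2 ⟨?_, ?_⟩
    · intro b hb
      obtain ⟨ε, hε, hbε⟩ : ∃ ε, 0 < ε ∧ b < 1 / (L + ε) := by
        rcases le_or_gt b 0 with hb0 | hb0
        · exact ⟨1, one_pos, hb0.trans_lt (by positivity)⟩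
        · have h1 : b * L < 1 := (lt_div_iff₀ hL).1 hb
          refine ⟨(1 / b - L) / 2, ?_, ?_⟩
          · have : L < 1 / b := (lt_div_iff₀ hb0).2 (by linarith [mul_comm b L])
            linarith
          · have hLb : L < 1 / b := (lt_div_iff₀ hb0).2 (by linarith [mul_comm b L])
            rw [lt_div_iff₀ (by linarith)]
            have h2 : b * (1 / b) = 1 := by field_simp
            nlinarith
      obtain ⟨δ, hδ, hδ1, hζδ⟩ :=
        hδget (hζlim.eventually (eventually_lt_nhds (lt_add_of_pos_right L hε)))
      have hLε : 0 < L + ε := by linarith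
      have ht0 : Tendsto (fun s : ℝ => (1 - (s / δ) ^ (L + ε)) / (L + ε)) l
          (nhds (1 / (L + ε))) := by
        have := (((hrp hLε hδ).const_sub 1).div_const (L + ε))
        simpa using this
      filter_upwards [hJ, eventually_mem_nhdsWithin,
        Filter.Eventually.filter_mono nhdsWithin_le_nhds (eventually_lt_nhds hδ),
        ht0.eventually (eventually_gt_nhds hbε)] with s hJs hs hsδ hbs
      rw [hJs]
      exact lt_of_lt_of_le hbs
        (key_lower hζcont hLε hδ hδ1 (fun τ hτ => (hζδ τ hτ).le) hs.1 hsδ.le)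
    · intro b hb
      have hb0 : 0 < b := lt_trans (by positivity) hb
      obtain ⟨ε, hε, hεL, hbε⟩ : ∃ ε, 0 < ε ∧ ε < L ∧ 1 / (L - ε) < b := by
        have h1 : 1 < b * L := (div_lt_iff₀ hL).1 hb
        have hLb : 1 / b < L := (div_lt_iff₀ hb0).2 (by linarith [mul_comm b L])
        have hib : 0 < 1 / b := by positivity
        refine ⟨(L - 1 / b) / 2, by linarith, by linarith, ?_⟩
        rw [div_lt_iff₀ (by linarith)]
        have h2 : b * (1 / b) = 1 := by field_simp
        nlinarith
      obtain ⟨δ, hδ, hδ1, hζδ⟩ :=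
        hδget (hζlim.eventually (eventually_gt_nhds (by linarith : L - ε < L)))
      have hLε : 0 < L - ε := by linarith
      have ht0 : Tendsto (fun s : ℝ => 1 / (L - ε) + (s / δ) ^ k₁ * (-Real.log δ)) l
          (nhds (1 / (L - ε) + 0 * (-Real.log δ))) :=
        tendsto_const_nhds.add ((hrp hk₁ hδ).mul_const _)
      rw [zero_mul, add_zero] at ht0
      filter_upwards [hJ, eventually_mem_nhdsWithin,
        Filter.Eventually.filter_mono nhdsWithin_le_nhds (eventually_lt_nhds hδ),
        ht0.eventually (eventually_lt_nhds hbε)] with s hJs hs hsδ hbs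
      rw [hJs]
      exact lt_of_le_of_lt
        (key_upper hζcont hk₁ (fun τ hτ => (hζbd τ hτ).1) hLε hδ hδ1
          (fun τ hτ => (hζδ τ hτ).le) hs.1 hsδ.le) hbs
  refine ⟨htendJ, ?_⟩
  have hneBot : l.NeBot := by
    apply mem_closure_iff_nhdsWithin_neBot.1
    rw [closure_Ioc (by norm_num : (0:ℝ) ≠ 1)]
    exact ⟨le_rfl, by norm_num⟩
  have hk₁L : k₁ ≤ L :=
    ge_of_tendsto hζlim (eventually_mem_nhdsWithin.mono (fun τ hτ => (hζbd τ hτ).1))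
  have hlt : 1 / L < 1 / k₁ + 1 :=
    lt_of_le_of_lt (one_div_le_one_div_of_le hk₁ hk₁L) (lt_add_one _)
  exact (htendJ.eventually (eventually_lt_nhds hlt)).mono (fun s hs => hs.le)
end
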